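/- arXiv:2203.02368 — 4 statements merged into one kernel-verified Lean document; each statement's English description precedes it below -/
import Mathlib

section
/- Let X be a real locally convex space and let B ⊆ X be a bounded Rosenthal subset, i.e. every sequence in B has a weak Cauchy subsequence. Then B is Mackey tame: for every weak-star compact subset M ⊆ X* (not necessarily equicontinuous), B is a tame family of functions on M (where b ∈ B acts on M by φ ↦ φ(b)). -/
open Filter Topology

/-- A sequence of real-valued functions is (combinatorially) independent. -/
def IndepSeq {X : Type*} (f : ℕ → X → ℝ) : Prop :=
  ∃ a b : ℝ, a < b ∧ ∀ P M : Finset ℕ, Disjoint P M →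
    ∃ x : X, (∀ n ∈ P, f n x < a) ∧ (∀ n ∈ M, b < f n x)

/-- A family of real-valued functions is tame if it contains no independent sequence. -/
def IsTameFamily {X : Type*} (F : Set (X → ℝ)) : Prop :=
  ¬ ∃ f : ℕ → X → ℝ, (∀ n, f n ∈ F) ∧ IndepSeq f

variable {E : Type*} [AddCommGroup E] [Module ℝ E] [TopologicalSpace E]

/-- The family of functions on `M ⊆ E*` obtained by evaluating the elements of `B ⊆ E`. -/
def evalFamily (B : Set E) (M : Set (WeakDual ℝ E)) : Set (M → ℝ) :=
  {g | ∃ b ∈ B, g = fun φ : M => (φ : WeakDual ℝ E) b}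

/-- A sequence is weak Cauchy if `(φ (x n))` converges for every continuous functional `φ`. -/
def IsWeakCauchy (x : ℕ → E) : Prop :=
  ∀ φ : E →L[ℝ] ℝ, ∃ l : ℝ, Tendsto (fun n => φ (x n)) atTop (𝓝 l)

/-- If `B` is a bounded Rosenthal subset of a real locally convex space `X`
(every sequence in `B` has a weak Cauchy subsequence), then `B` is Mackey tame: for every
weak-star compact `M ⊆ X*` (not necessarily equicontinuous), `B` is a tame family of
functions on `M`. -/
theorem rosenthal_subset_is_mackey_tame
    {X : Type*} [AddCommGroup X] [Module ℝ X] [TopologicalSpace X]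
    [IsTopologicalAddGroup X] [ContinuousSMul ℝ X] [LocallyConvexSpace ℝ X]
    (B : Set X) (hB : Bornology.IsVonNBounded ℝ B)
    (hRos : ∀ x : ℕ → X, (∀ n, x n ∈ B) →
      ∃ ψ : ℕ → ℕ, StrictMono ψ ∧ IsWeakCauchy (x ∘ ψ)) :
    ∀ M : Set (WeakDual ℝ X), IsCompact M → IsTameFamily (evalFamily B M) := by
  intro M hM
  rintro ⟨f, hf, a, b, hab, hind⟩
  choose x hxB hfx using hf
  obtain ⟨ψ, hψ, hWC⟩ := hRos x hxB
  -- the alternating constraint sets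
  set P : ℕ → WeakDual ℝ X → Prop := fun k φ =>
    (Even k → φ (x (ψ k)) ≤ a) ∧ (¬ Even k → b ≤ φ (x (ψ k))) with hP
  set S : ℕ → Set (WeakDual ℝ X) := fun N => M ∩ {φ | ∀ k ≤ N, P k φ} with hSdef
  have hclosed : ∀ N, IsClosed (S N) := by
    intro N
    apply IsClosed.inter hM.isClosed
    have : {φ : WeakDual ℝ X | ∀ k ≤ N, P k φ}
        = ⋂ k, ⋂ (_ : k ≤ N), {φ | P k φ} := by ext φ; simp
    rw [this]
    refine isClosed_iInter fun k => isClosed_iInter fun _ => IsClosed.inter ?_ ?_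
    · by_cases hk : Even k
      · simp only [hP, hk, true_implies]
        exact isClosed_le (WeakDual.eval_continuous _) continuous_const
      · simp only [hP, hk, false_implies]
        exact isClosed_univ
    · by_cases hk : Even k
      · simp only [hP, hk, not_true, false_implies]
        exact isClosed_univ
      · simp only [hP, hk, not_false_iff, true_implies]
        exact isClosed_le continuous_const (WeakDual.eval_continuous _)
  have hSne : ∀ N, (S N).Nonempty := by
    intro N
    have hdisj : Disjoint
        (((Finset.range (N+1)).filter (fun k => Even k)).image ψ)
        (((Finset.range (N+1)).filter (fun k => ¬ Even k)).image ψ) := by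
      rw [Finset.disjoint_image hψ.injective]
      exact Finset.disjoint_filter_filter_not _ _ _
    obtain ⟨z, hzP, hzM⟩ := hind _ _ hdisj
    refine ⟨(z : WeakDual ℝ X), z.2, fun k hk => ⟨fun hke => ?_, fun hko => ?_⟩⟩
    · have := hzP (ψ k) (Finset.mem_image_of_mem ψ
        (Finset.mem_filter.2 ⟨Finset.mem_range.2 (Nat.lt_succ_of_le hk), hke⟩))
      rw [hfx (ψ k)] at this
      exact le_of_lt this
    · have := hzM (ψ k) (Finset.mem_image_of_mem ψ
        (Finset.mem_filter.2 ⟨Finset.mem_range.2 (Nat.lt_succ_of_le hk), hko⟩))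
      rw [hfx (ψ k)] at this
      exact le_of_lt this
  have hanti : ∀ N, S (N+1) ⊆ S N := fun N φ hφ =>
    ⟨hφ.1, fun k hk => hφ.2 k (hk.trans (Nat.le_succ N))⟩
  obtain ⟨φ, hφ⟩ := IsCompact.nonempty_iInter_of_sequence_nonempty_isCompact_isClosed S hanti
    hSne (hM.of_isClosed_subset (hclosed 0) Set.inter_subset_left) hclosed
  have hall : ∀ k, P k φ := fun k => (Set.mem_iInter.1 hφ k).2 k le_rfl
  obtain ⟨l, hl⟩ := hWC (φ : X →L[ℝ] ℝ)
  have t2k : Tendsto (fun k : ℕ => 2 * k) atTop atTop :=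
    tendsto_atTop_mono (fun k => by simp only [id]; omega) tendsto_id
  have t2k1 : Tendsto (fun k : ℕ => 2 * k + 1) atTop atTop :=
    tendsto_atTop_mono (fun k => by simp only [id]; omega) tendsto_id
  have hle : l ≤ a := by
    refine le_of_tendsto (hl.comp t2k) (Eventually.of_forall fun k => ?_)
    exact (hall (2 * k)).1 ⟨k, by ring⟩
  have hge : b ≤ l := by
    refine ge_of_tendsto (hl.comp t2k1) (Eventually.of_forall fun k => ?_)
    exact (hall (2 * k + 1)).2 (by simp [Nat.even_add_one, Nat.even_iff, Nat.mul_mod_right])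
  linarith
end

section
/- Let X ⊆ l¹ be the normed subspace consisting of all finitely supported sequences (with the norm inherited from l¹). Then the standard unit vector basis (e_n) is an l¹-sequence in X, but there exists no continuous linear topological embedding of l¹ into X. Hence a normed space may contain no isomorphic copy of l¹ while still containing a bounded l¹-sequence. -/
open Filter Topology

/-- The Banach space `l¹` of absolutely summable real sequences. -/
noncomputable abbrev ellOne : Type := ↥(lp (fun _ : ℕ => ℝ) 1)

/-- The standard unit vector basis of `l¹`. -/
noncomputable def stdBasis (n : ℕ) : ellOne := lp.single 1 n (1 : ℝ)

/-- A sequence in a locally convex (e.g. normed) space is an `l¹`-sequence. -/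
def IsL1Seq {E : Type*} [AddCommGroup E] [Module ℝ E] [TopologicalSpace E]
    (x : ℕ → E) : Prop :=
  ∃ ρ : Seminorm ℝ E, Continuous ρ ∧ ∃ δ : ℝ, 0 < δ ∧
    ∀ (n : ℕ) (c : ℕ → ℝ),
      δ * ∑ i ∈ Finset.range n, |c i| ≤ ρ (∑ i ∈ Finset.range n, c i • x i)

/-- The normed subspace of `l¹` of all finitely supported sequences. -/
noncomputable def finSupp : Submodule ℝ ellOne where
  carrier := {α | ∃ N : ℕ, ∀ n, N ≤ n → α n = 0}
  zero_mem' := ⟨0, fun n _ => rfl⟩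
  add_mem' := by
    rintro a b ⟨N, hN⟩ ⟨M, hM⟩
    refine ⟨max N M, fun n hn => ?_⟩
    have h : (a + b) n = a n + b n := rfl
    rw [h, hN n (le_trans (le_max_left _ _) hn), hM n (le_trans (le_max_right _ _) hn),
      add_zero]
  smul_mem' := by
    rintro c a ⟨N, hN⟩
    refine ⟨N, fun n hn => ?_⟩
    have h : (c • a) n = c * a n := rfl
    rw [h, hN n hn, mul_zero]

theorem stdBasis_mem_finSupp (n : ℕ) : stdBasis n ∈ finSupp := by
  refine ⟨n + 1, fun m hm => ?_⟩
  have h : (stdBasis n) m = if m = n then (1 : ℝ) else 0 := by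
    rw [stdBasis, lp.single_apply]
    simp [Pi.single_apply]
  rw [h, if_neg (by omega)]

/-- Evaluation at coordinate `m` as a linear map on `l¹`. -/
noncomputable def coordLM (m : ℕ) : ellOne →ₗ[ℝ] ℝ where
  toFun x := x m
  map_add' _ _ := rfl
  map_smul' _ _ := rfl

theorem coordLM_apply (m : ℕ) (x : ellOne) : coordLM m x = x m := rfl

theorem coordLM_cont (m : ℕ) : Continuous (coordLM m) := by
  refine (LipschitzWith.of_dist_le_mul (K := 1) fun a b => ?_).continuous
  have : ‖(a - b : ellOne) m‖ ≤ ‖a - b‖ := lp.norm_apply_le_norm one_ne_zero (a - b) m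
  simpa [coordLM_apply, dist_eq_norm, Real.norm_eq_abs] using this

theorem stdBasis_li : LinearIndependent ℝ stdBasis := by
  rw [linearIndependent_iff']
  intro s g h i hi
  have := congrArg (coordLM i) h
  rw [map_sum, map_zero] at this
  simp only [map_smul] at this
  have hcoord : ∀ j, coordLM i (stdBasis j) = if i = j then 1 else 0 := by
    intro j
    by_cases hij : i = j
    · subst hij; simp [coordLM_apply, stdBasis, lp.single_apply_self]
    · simp [coordLM_apply, stdBasis, lp.single_apply_ne _ _ _ hij, hij]
  rw [Finset.sum_congr rfl (fun j _ => by rw [hcoord j])] at this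
  simpa [Finset.sum_ite_eq' s i, hi] using this

theorem stdBasis_norm_sum (n : ℕ) (c : ℕ → ℝ) :
    ‖∑ i ∈ Finset.range n, c i • stdBasis i‖ = ∑ i ∈ Finset.range n, |c i| := by
  have h1 : ∀ i, c i • stdBasis i = lp.single 1 i (c i) := by
    intro i
    rw [stdBasis, ← lp.single_smul]
    norm_num
  rw [Finset.sum_congr rfl (fun i _ => h1 i)]
  have := lp.norm_sum_single (p := 1) (by norm_num) c (Finset.range n)
  simp only [ENNReal.toReal_one, Real.rpow_one] at this
  simpa [Real.norm_eq_abs] using this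

set_option maxHeartbeats 1000000 in
theorem no_embedding : ¬ ∃ φ : ellOne →L[ℝ] finSupp, IsEmbedding φ := by
  rintro ⟨φ, hφ⟩
  set ψ : ellOne →ₗ[ℝ] ellOne := (finSupp.subtype).comp (φ : ellOne →ₗ[ℝ] finSupp) with hψ
  have hψcont : Continuous ψ := continuous_subtype_val.comp φ.continuous
  set M : ℕ → Submodule ℝ ellOne := fun n =>
    ⨅ m : {m : ℕ // n ≤ m}, Submodule.comap ((coordLM m.1).comp ψ) (⊥ : Submodule ℝ ℝ) with hM
  have hMmem : ∀ n x, x ∈ M n ↔ ∀ m, n ≤ m → (ψ x) m = 0 := by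
    intro n x
    simp only [hM, Submodule.mem_iInf, Subtype.forall, Submodule.mem_comap, Submodule.mem_bot,
      LinearMap.comp_apply]
    exact Iff.rfl
  have hMclosed : ∀ n, IsClosed (M n : Set ellOne) := by
    intro n
    have : (M n : Set ellOne) = ⋂ m : {m : ℕ // n ≤ m}, (fun x => coordLM m.1 (ψ x)) ⁻¹' {0} := by
      ext x
      simp [hMmem n x, Set.mem_iInter, Subtype.forall, coordLM_apply]
    rw [this]
    exact isClosed_iInter fun m =>
      IsClosed.preimage ((coordLM_cont m.1).comp hψcont) isClosed_singleton
  have hcover : (⋃ n, (M n : Set ellOne)) = Set.univ := by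
    ext x
    simp only [Set.mem_iUnion, Set.mem_univ, iff_true]
    obtain ⟨N, hN⟩ := (φ x).2
    exact ⟨N, (hMmem N x).2 hN⟩
  haveI : BaireSpace ellOne := BaireSpace.of_completelyPseudoMetrizable
  obtain ⟨n, hn⟩ := nonempty_interior_of_iUnion_of_closed hMclosed hcover
  have htop : M n = ⊤ := Submodule.eq_top_of_nonempty_interior' _ hn
  set χ : ellOne →ₗ[ℝ] (Fin n → ℝ) := LinearMap.pi (fun i : Fin n => (coordLM i.1).comp ψ) with hχ
  have hχinj : Function.Injective χ := by
    rw [← LinearMap.ker_eq_bot, LinearMap.ker_eq_bot']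
    intro x hx
    have hcoords : ∀ m, (ψ x) m = 0 := by
      intro m
      by_cases hm : n ≤ m
      · exact (hMmem n x).1 (htop ▸ Submodule.mem_top) m hm
      · have := congrFun hx ⟨m, not_le.1 hm⟩
        simpa [hχ, coordLM_apply] using this
    have hψ0 : ψ x = 0 := by
      apply lp.ext
      funext m
      exact hcoords m
    have : φ x = 0 := Subtype.ext hψ0
    have h0 : φ x = φ 0 := by rw [this, map_zero]
    exact hφ.injective h0
  haveI : FiniteDimensional ℝ ellOne := FiniteDimensional.of_injective χ hχinj
  set d := Module.finrank ℝ ellOne with hd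
  have li : LinearIndependent ℝ (fun i : Fin (d + 1) => stdBasis i) :=
    stdBasis_li.comp (fun i : Fin (d + 1) => (i : ℕ)) Fin.val_injective
  have := li.fintype_card_le_finrank
  simp only [Fintype.card_fin, ← hd] at this
  omega

/-- In the normed space `X ⊆ l¹` of finitely supported sequences, the
standard unit vectors form an `l¹`-sequence, yet there is no continuous linear topological
embedding of `l¹` into `X`.  Hence a normed space may contain no isomorphic copy of `l¹`
while still containing a bounded `l¹`-sequence. -/

theorem finSupp_has_l1_sequence_but_no_l1_copy :
    IsL1Seq (fun n => (⟨stdBasis n, stdBasis_mem_finSupp n⟩ : finSupp)) ∧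
    ¬ ∃ φ : ellOne →L[ℝ] finSupp, IsEmbedding φ := by
  constructor
  · refine ⟨normSeminorm ℝ finSupp, continuous_norm, 1, one_pos, fun n c => ?_⟩
    rw [one_mul]
    have hcoe : ((∑ i ∈ Finset.range n, c i • (⟨stdBasis i, stdBasis_mem_finSupp i⟩ : finSupp) :
        finSupp) : ellOne) = ∑ i ∈ Finset.range n, c i • stdBasis i := by
      push_cast
      rfl
    have : ‖(∑ i ∈ Finset.range n, c i • (⟨stdBasis i, stdBasis_mem_finSupp i⟩ : finSupp))‖ =
        ‖∑ i ∈ Finset.range n, c i • stdBasis i‖ := by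
      rw [← hcoe]; rfl
    rw [show (normSeminorm ℝ finSupp) _ = _ from this, stdBasis_norm_sum]
  · exact no_embedding
end

section
/- Let K be a compact Hausdorff space, let (A_n)_{n∈ℕ} be a sequence of families of bounded real-valued functions on K, and let B denote the closed unit ball of C(K) (continuous functions with sup-norm at most 1). Define A := ⋂_{n∈ℕ} (A_n + 2^{-n}·B), where A_n + 2^{-n}B = {f + 2^{-n}g : f ∈ A_n, g ∈ B}. If every A_n is a fragmented family of functions on K, then A is a fragmented family; if every A_n is an eventually fragmented family, then A is eventually fragmented. -/
open Filter Topology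

/-- A family of real-valued functions on a topological space is fragmented if every
nonempty subset has a relatively nonempty open piece on which every member of the family
has oscillation `< ε`. -/
def IsFragmentedFamily {K : Type*} [TopologicalSpace K] (F : Set (K → ℝ)) : Prop :=
  ∀ A : Set K, A.Nonempty → ∀ ε : ℝ, 0 < ε → ∃ O : Set K, IsOpen O ∧
    (O ∩ A).Nonempty ∧ ∀ f ∈ F, ∀ x ∈ O ∩ A, ∀ y ∈ O ∩ A, |f x - f y| < ε

/-- A family is eventually fragmented if every sequence in it has a subsequence which is a
fragmented family. -/
def IsEventuallyFragmented {K : Type*} [TopologicalSpace K] (F : Set (K → ℝ)) : Prop :=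
  ∀ f : ℕ → K → ℝ, (∀ n, f n ∈ F) →
    ∃ ψ : ℕ → ℕ, StrictMono ψ ∧ IsFragmentedFamily (Set.range (fun k => f (ψ k)))

/-- Fragmentation at a fixed scale `ε`. -/
def FragAt {K : Type*} [TopologicalSpace K] (F : Set (K → ℝ)) (ε : ℝ) : Prop :=
  ∀ A : Set K, A.Nonempty → ∃ O : Set K, IsOpen O ∧
    (O ∩ A).Nonempty ∧ ∀ f ∈ F, ∀ x ∈ O ∩ A, ∀ y ∈ O ∩ A, |f x - f y| < ε

lemma fragAt_of_isFragmented {K : Type*} [TopologicalSpace K] {F : Set (K → ℝ)} {ε : ℝ}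
    (h : IsFragmentedFamily F) (hε : 0 < ε) : FragAt F ε :=
  fun A hA => h A hA ε hε

lemma fragAt_mono {K : Type*} [TopologicalSpace K] {F G : Set (K → ℝ)} {ε : ℝ}
    (hFG : F ⊆ G) (h : FragAt G ε) : FragAt F ε := by
  intro A hA
  obtain ⟨O, hO, hne, hosc⟩ := h A hA
  exact ⟨O, hO, hne, fun f hf => hosc f (hFG hf)⟩

lemma fragAt_union {K : Type*} [TopologicalSpace K] {F G : Set (K → ℝ)} {ε : ℝ}
    (hF : FragAt F ε) (hG : FragAt G ε) : FragAt (F ∪ G) ε := by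
  intro A hA
  obtain ⟨O1, hO1, hne1, h1⟩ := hF A hA
  obtain ⟨O2, hO2, hne2, h2⟩ := hG (O1 ∩ A) hne1
  refine ⟨O1 ∩ O2, hO1.inter hO2, ?_, ?_⟩
  · obtain ⟨x, hx⟩ := hne2
    exact ⟨x, ⟨hx.2.1, hx.1⟩, hx.2.2⟩
  · rintro f (hf | hf) x ⟨⟨hx1, hx2⟩, hxA⟩ y ⟨⟨hy1, hy2⟩, hyA⟩
    · exact h1 f hf x ⟨hx1, hxA⟩ y ⟨hy1, hyA⟩
    · exact h2 f hf x ⟨hx2, hx1, hxA⟩ y ⟨hy2, hy1, hyA⟩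

lemma fragAt_finite {K : Type*} [TopologicalSpace K] (u : ℕ → K → ℝ) (ε : ℝ)
    (hu : ∀ k, FragAt {u k} ε) : ∀ n, FragAt {f | ∃ k < n, f = u k} ε := by
  intro n
  induction n with
  | zero =>
      intro A hA
      refine ⟨Set.univ, isOpen_univ, by simpa using hA, ?_⟩
      rintro f ⟨k, hk, _⟩
      omega
  | succ n ih =>
      refine fragAt_mono ?_ (fragAt_union ih (hu n))
      rintro f ⟨k, hk, rfl⟩
      rcases Nat.lt_succ_iff_lt_or_eq.mp hk with h | rfl
      · exact Or.inl ⟨k, h, rfl⟩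
      · exact Or.inr rfl

lemma abs_add_smul_lt {K : Type*} (f g : K → ℝ) (x y : K) (c ε : ℝ)
    (hc0 : 0 ≤ c) (hc : c < ε / 4) (hf : |f x - f y| < ε / 2)
    (hgx : |g x| ≤ 1) (hgy : |g y| ≤ 1) :
    |(f + c • g) x - (f + c • g) y| < ε := by
  have h1 : (f + c • g) x - (f + c • g) y = (f x - f y) + c * (g x - g y) := by
    simp only [Pi.add_apply, Pi.smul_apply, smul_eq_mul]; ring
  rw [h1]
  have h2 : |(f x - f y) + c * (g x - g y)| ≤ |f x - f y| + c * |g x - g y| := by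
    calc |(f x - f y) + c * (g x - g y)| ≤ |f x - f y| + |c * (g x - g y)| := abs_add_le _ _
      _ = |f x - f y| + c * |g x - g y| := by rw [abs_mul, abs_of_nonneg hc0]
  have h3 : |g x - g y| ≤ 2 := by
    rw [sub_eq_add_neg]
    exact (abs_add_le _ _).trans (by rw [abs_neg]; linarith)
  nlinarith [mul_le_mul_of_nonneg_left h3 hc0]

/-- Let `K` be compact Hausdorff, `(Aₙ)` families of bounded real-valued
functions on `K` and `B` the closed unit ball of `C(K)`.  If each `Aₙ` is fragmented
(resp. eventually fragmented), then so is `A := ⋂ₙ (Aₙ + 2⁻ⁿ·B)`. -/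
theorem fragmented_hyperspace_intersection
    {K : Type*} [TopologicalSpace K] [CompactSpace K] [T2Space K]
    (A : ℕ → Set (K → ℝ))
    (hbd : ∀ n, ∀ f ∈ A n, ∃ C : ℝ, ∀ x, |f x| ≤ C) :
    (((∀ n, IsFragmentedFamily (A n)) →
        IsFragmentedFamily
          (⋂ n : ℕ, {h : K → ℝ | ∃ f ∈ A n,
            ∃ g : K → ℝ, Continuous g ∧ (∀ x, |g x| ≤ 1) ∧
              h = f + ((1 : ℝ) / 2) ^ n • g}))) ∧
    ((∀ n, IsEventuallyFragmented (A n)) →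
        IsEventuallyFragmented
          (⋂ n : ℕ, {h : K → ℝ | ∃ f ∈ A n,
            ∃ g : K → ℝ, Continuous g ∧ (∀ x, |g x| ≤ 1) ∧
              h = f + ((1 : ℝ) / 2) ^ n • g})) := by
  constructor
  · intro hfrag T hT ε hε
    obtain ⟨n, hn⟩ : ∃ n : ℕ, ((1 : ℝ) / 2) ^ n < ε / 4 :=
      exists_pow_lt_of_lt_one (by linarith) (by norm_num)
    obtain ⟨O, hO, hne, hosc⟩ := hfrag n T hT (ε / 2) (by linarith)
    refine ⟨O, hO, hne, ?_⟩
    intro h hh x hx y hy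
    obtain ⟨f, hf, g, hg, hgb, rfl⟩ := Set.mem_iInter.mp hh n
    exact abs_add_smul_lt f g x y _ ε (by positivity) hn
      (hosc f hf x hx y hy) (hgb x) (hgb y)
  · intro hev h hhA
    have hdec : ∀ n k, ∃ f ∈ A n, ∃ g : K → ℝ, Continuous g ∧ (∀ x, |g x| ≤ 1) ∧
        h k = f + ((1 : ℝ) / 2) ^ n • g := fun n k => Set.mem_iInter.mp (hhA k) n
    choose F hF G hGc hGb hFG using hdec
    have hext : ∀ (n : ℕ) (s : ℕ → ℕ), ∃ ψ : ℕ → ℕ, StrictMono ψ ∧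
        IsFragmentedFamily (Set.range fun k => F n (s (ψ k))) :=
      fun n s => hev n (fun k => F n (s k)) (fun k => hF n (s k))
    choose Ψ hΨmono hΨfrag using hext
    let σ : ℕ → ℕ → ℕ := fun n =>
      Nat.rec (Ψ 0 id) (fun m σm => σm ∘ Ψ (m + 1) σm) n
    have hσ : ∀ n, StrictMono (σ n) ∧
        IsFragmentedFamily (Set.range fun k => F n (σ n k)) := by
      intro n
      induction n with
      | zero => exact ⟨hΨmono 0 id, hΨfrag 0 id⟩
      | succ m ih => exact ⟨ih.1.comp (hΨmono (m + 1) (σ m)), hΨfrag (m + 1) (σ m)⟩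
    have hfac : ∀ n j, ∃ τ : ℕ → ℕ, σ (n + j) = σ n ∘ τ := by
      intro n j
      induction j with
      | zero => exact ⟨id, rfl⟩
      | succ j ih =>
          obtain ⟨τ, hτ⟩ := ih
          refine ⟨τ ∘ Ψ (n + j + 1) (σ (n + j)), ?_⟩
          show σ (n + j) ∘ Ψ (n + j + 1) (σ (n + j)) = σ n ∘ (τ ∘ Ψ (n + j + 1) (σ (n + j)))
          rw [hτ]
          rfl
    have hφ : StrictMono (fun k => σ k k) := by
      apply strictMono_nat_of_lt_succ
      intro k
      have h1 : σ k k ≤ σ (k + 1) k :=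
        (hσ k).1.monotone ((hΨmono (k + 1) (σ k)).le_apply)
      exact lt_of_le_of_lt h1 ((hσ (k + 1)).1 (Nat.lt_succ_self k))
    refine ⟨fun k => σ k k, hφ, ?_⟩
    intro T hT ε hε
    obtain ⟨n, hn⟩ : ∃ n : ℕ, ((1 : ℝ) / 2) ^ n < ε / 4 :=
      exists_pow_lt_of_lt_one (by linarith) (by norm_num)
    have hsing : ∀ k, FragAt {F n (σ k k)} (ε / 2) := by
      intro k
      obtain ⟨ψ, _, hfr⟩ := hev n (fun _ => F n (σ k k)) (fun _ => hF n (σ k k))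
      exact fragAt_mono (by rintro f rfl; exact ⟨0, rfl⟩)
        (fragAt_of_isFragmented hfr (by linarith))
    have hfin : FragAt {f | ∃ k < n, f = F n (σ k k)} (ε / 2) :=
      fragAt_finite (fun k => F n (σ k k)) _ hsing n
    have hGn : FragAt (Set.range fun k => F n (σ n k)) (ε / 2) :=
      fragAt_of_isFragmented (hσ n).2 (by linarith)
    have hall : FragAt (Set.range fun k => F n (σ k k)) (ε / 2) := by
      refine fragAt_mono ?_ (fragAt_union hGn hfin)
      rintro f ⟨k, rfl⟩
      rcases lt_or_ge k n with hk | hk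
      · exact Or.inr ⟨k, hk, rfl⟩
      · obtain ⟨j, rfl⟩ := Nat.exists_eq_add_of_le hk
        obtain ⟨τ, hτ⟩ := hfac n j
        exact Or.inl ⟨τ (n + j), (congrArg (F n) (congrFun hτ (n + j))).symm⟩
    obtain ⟨O, hO, hne, hosc⟩ := hall T hT
    refine ⟨O, hO, hne, ?_⟩
    rintro hh ⟨k, rfl⟩ x hx y hy
    simp only
    rw [hFG n (σ k k)]
    exact abs_add_smul_lt _ _ x y _ ε (by positivity) hn
      (hosc _ ⟨k, rfl⟩ x hx y hy) (hGb n (σ k k) x) (hGb n (σ k k) y)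
end

section
/- Let X be a topological space and let F be a family of continuous real-valued functions on X which is an eventually fragmented family of functions on X. Then the closure of F in the topology of uniform convergence on X is also an eventually fragmented family. Likewise, if F is a fragmented family, then its closure in the topology of uniform convergence (indeed even its closure in the topology of pointwise convergence) is a fragmented family. -/
open Filter Topology

/-- Uniform approximation from the closure in the uniform topology. -/
lemma exists_approx_of_mem_uniform_closure {X : Type*} (F : Set (X → ℝ)) (h : X → ℝ)
    (hh : UniformFun.ofFun h ∈ closure (⇑UniformFun.ofFun '' F : Set (UniformFun X ℝ)))
    {ε : ℝ} (hε : 0 < ε) : ∃ f ∈ F, ∀ x, |f x - h x| < ε := by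
  have hV : {p : ℝ × ℝ | dist p.1 p.2 < ε} ∈ uniformity ℝ := Metric.dist_mem_uniformity hε
  have hU : { g : UniformFun X ℝ | (UniformFun.ofFun h, g) ∈
      UniformFun.gen X ℝ {p : ℝ × ℝ | dist p.1 p.2 < ε} } ∈ 𝓝 (UniformFun.ofFun h) :=
    (UniformFun.hasBasis_nhds X ℝ (UniformFun.ofFun h)).mem_of_mem hV
  obtain ⟨g, hg1, hg2⟩ := (mem_closure_iff_nhds.mp hh _ hU)
  obtain ⟨f, hfF, rfl⟩ := hg2
  refine ⟨f, hfF, fun x => ?_⟩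
  have := hg1 x
  simpa [UniformFun.gen, Real.dist_eq, abs_sub_comm] using this

lemma continuous_of_mem_uniform_closure {X : Type*} [TopologicalSpace X] (F : Set (X → ℝ))
    (hF : ∀ f ∈ F, Continuous f) (h : X → ℝ)
    (hh : UniformFun.ofFun h ∈ closure (⇑UniformFun.ofFun '' F : Set (UniformFun X ℝ))) :
    Continuous h := by
  have H : ∀ n : ℕ, ∃ f ∈ F, ∀ x, |f x - h x| < 1 / (n + 1 : ℝ) := fun n =>
    exists_approx_of_mem_uniform_closure F h hh (by positivity)
  choose f hfF hfd using H
  have : TendstoUniformly f h atTop := by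
    rw [Metric.tendstoUniformly_iff]
    intro ε hε
    obtain ⟨N, hN⟩ := exists_nat_one_div_lt hε
    filter_upwards [Filter.eventually_ge_atTop N] with n hn x
    have h1 : (1 : ℝ) / (n + 1) ≤ 1 / (N + 1) := by
      apply one_div_le_one_div_of_le (by positivity)
      exact_mod_cast by omega
    have := hfd n x
    rw [Real.dist_eq, abs_sub_comm]
    linarith
  exact this.continuous (Filter.Eventually.of_forall fun n => hF _ (hfF n)).frequently

/-- For a family `F` of continuous real-valued functions on a
topological space `X`: if `F` is eventually fragmented, so is its closure in the topology
of uniform convergence; and if `F` is fragmented, so is its closure in the topology of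
pointwise convergence (hence also its uniform closure). -/
theorem closure_of_fragmented_family
    {X : Type*} [TopologicalSpace X] (F : Set (X → ℝ)) (hF : ∀ f ∈ F, Continuous f) :
    (IsEventuallyFragmented F →
      IsEventuallyFragmented
        (⇑UniformFun.toFun '' closure (⇑UniformFun.ofFun '' F : Set (UniformFun X ℝ)))) ∧
    (IsFragmentedFamily F → IsFragmentedFamily (closure F)) := by
  constructor
  · -- eventually fragmented
    intro hEF g hg
    have hg' : ∀ n, UniformFun.ofFun (g n) ∈
        closure (⇑UniformFun.ofFun '' F : Set (UniformFun X ℝ)) := by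
      intro n
      obtain ⟨h, hh, hh2⟩ := hg n
      have : UniformFun.ofFun (g n) = h := by rw [← hh2]; rfl
      rwa [this]
    have hgc : ∀ n, Continuous (g n) := fun n =>
      continuous_of_mem_uniform_closure F hF (g n) (hg' n)
    have H : ∀ n : ℕ, ∃ f ∈ F, ∀ x, |f x - g n x| < 1 / (n + 1 : ℝ) := fun n =>
      exists_approx_of_mem_uniform_closure F (g n) (hg' n) (by positivity)
    choose f hfF hfd using H
    obtain ⟨ψ, hψ, hfrag⟩ := hEF f hfF
    refine ⟨ψ, hψ, ?_⟩
    intro A hA ε hε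
    obtain ⟨N, hN⟩ : ∃ N : ℕ, 1 / (N + 1 : ℝ) < ε / 3 := exists_nat_one_div_lt (by linarith)
    obtain ⟨O₁, hO₁, hO₁A, hfrag'⟩ := hfrag A hA (ε / 3) (by linarith)
    obtain ⟨a, haO₁, haA⟩ := hO₁A
    set O₂ : Set X := ⋂ k : Fin N, (g (ψ k)) ⁻¹' Metric.ball (g (ψ k) a) (ε / 2) with hO₂def
    have hO₂ : IsOpen O₂ :=
      isOpen_iInter_of_finite fun k => (Metric.isOpen_ball).preimage (hgc (ψ k))
    have haO₂ : a ∈ O₂ := by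
      rw [hO₂def, Set.mem_iInter]
      intro k
      simp [Metric.mem_ball]; positivity
    refine ⟨O₁ ∩ O₂, hO₁.inter hO₂, ⟨a, ⟨haO₁, haO₂⟩, haA⟩, ?_⟩
    rintro _ ⟨k, rfl⟩ x ⟨⟨hxO₁, hxO₂⟩, hxA⟩ y ⟨⟨hyO₁, hyO₂⟩, hyA⟩
    by_cases hk : k < N
    · have hx := Set.mem_iInter.mp hxO₂ ⟨k, hk⟩
      have hy := Set.mem_iInter.mp hyO₂ ⟨k, hk⟩
      simp only [Set.mem_preimage, Metric.mem_ball, Real.dist_eq] at hx hy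
      calc |g (ψ k) x - g (ψ k) y|
          ≤ |g (ψ k) x - g (ψ k) a| + |g (ψ k) a - g (ψ k) y| := abs_sub_le _ _ _
        _ < ε / 2 + ε / 2 := by rw [abs_sub_comm (g (ψ k) a)]; exact add_lt_add hx hy
        _ = ε := by ring
    · push_neg at hk
      have hψk : N ≤ ψ k := le_trans hk (hψ.le_apply)
      have hsmall : (1 : ℝ) / (ψ k + 1) < ε / 3 := by
        refine lt_of_le_of_lt ?_ hN
        apply one_div_le_one_div_of_le (by positivity)
        exact_mod_cast by omega
      have hf := hfrag' (fun t => f (ψ k) t) ⟨k, rfl⟩ x ⟨hxO₁, hxA⟩ y ⟨hyO₁, hyA⟩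
      have hdx := hfd (ψ k) x
      have hdy := hfd (ψ k) y
      have key : |g (ψ k) x - g (ψ k) y| ≤
          |f (ψ k) x - g (ψ k) x| + |f (ψ k) x - f (ψ k) y| + |f (ψ k) y - g (ψ k) y| := by
        have h1 : g (ψ k) x - g (ψ k) y =
            -(f (ψ k) x - g (ψ k) x) + (f (ψ k) x - f (ψ k) y) + (f (ψ k) y - g (ψ k) y) := by
          ring
        rw [h1]
        calc |-(f (ψ k) x - g (ψ k) x) + (f (ψ k) x - f (ψ k) y) + (f (ψ k) y - g (ψ k) y)|
            ≤ |-(f (ψ k) x - g (ψ k) x) + (f (ψ k) x - f (ψ k) y)| + |f (ψ k) y - g (ψ k) y| :=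
              abs_add_le _ _
          _ ≤ |-(f (ψ k) x - g (ψ k) x)| + |f (ψ k) x - f (ψ k) y| + |f (ψ k) y - g (ψ k) y| := by
              gcongr; exact abs_add_le _ _
          _ = |f (ψ k) x - g (ψ k) x| + |f (ψ k) x - f (ψ k) y| + |f (ψ k) y - g (ψ k) y| := by
              rw [abs_neg]
      linarith
  · -- pointwise closure of a fragmented family
    intro hfr A hA ε hε
    obtain ⟨O, hO, hOA, hfrag⟩ := hfr A hA (ε / 2) (by linarith)
    refine ⟨O, hO, hOA, ?_⟩
    intro g hg x hx y hy
    -- find f ∈ F close to g at x and y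
    have hU : IsOpen {h : X → ℝ | |h x - g x| < ε / 4 ∧ |h y - g y| < ε / 4} := by
      have h1 : IsOpen {h : X → ℝ | |h x - g x| < ε / 4} := by
        have : {h : X → ℝ | |h x - g x| < ε / 4} =
            (fun h : X → ℝ => h x) ⁻¹' Metric.ball (g x) (ε / 4) := by
          ext h; simp [Metric.mem_ball, Real.dist_eq]
        rw [this]; exact Metric.isOpen_ball.preimage (continuous_apply x)
      have h2 : IsOpen {h : X → ℝ | |h y - g y| < ε / 4} := by
        have : {h : X → ℝ | |h y - g y| < ε / 4} =
            (fun h : X → ℝ => h y) ⁻¹' Metric.ball (g y) (ε / 4) := by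
          ext h; simp [Metric.mem_ball, Real.dist_eq]
        rw [this]; exact Metric.isOpen_ball.preimage (continuous_apply y)
      exact h1.inter h2
    have hgU : g ∈ {h : X → ℝ | |h x - g x| < ε / 4 ∧ |h y - g y| < ε / 4} := by
      constructor <;> simp <;> positivity
    obtain ⟨f, ⟨hfx, hfy⟩, hfF⟩ := mem_closure_iff.mp hg _ hU hgU
    have hxy := hfrag f hfF x hx y hy
    have key : |g x - g y| ≤ |f x - g x| + |f x - f y| + |f y - g y| := by
      have h1 : g x - g y = -(f x - g x) + (f x - f y) + (f y - g y) := by ring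
      rw [h1]
      calc |-(f x - g x) + (f x - f y) + (f y - g y)|
          ≤ |-(f x - g x) + (f x - f y)| + |f y - g y| := abs_add_le _ _
        _ ≤ |-(f x - g x)| + |f x - f y| + |f y - g y| := by gcongr; exact abs_add_le _ _
        _ = |f x - g x| + |f x - f y| + |f y - g y| := by rw [abs_neg]
    linarith
end
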